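/- For z \ne 0, the generalized Bessel polynomials satisfy the recurrence in \mu: (n+\mu+2) Y_n^{\mu+2}(z) = (2n+\mu+2 - 2/z) Y_n^{\mu+1}(z) + (2/z) Y_n^\mu(z). -/

import Mathlib

open Finset

/-- Generalized Bessel polynomial `Y_n^μ(z)`. -/
noncomputable def genBessel (n : ℕ) (μ z : ℂ) : ℂ :=
  ∑ k ∈ Finset.range (n + 1),
    (n.choose k : ℂ) * (ascPochhammer ℂ k).eval ((n : ℂ) + μ + 1) * (z / 2) ^ k

private lemma poch_left (x : ℂ) (k : ℕ) :
    (ascPochhammer ℂ (k + 1)).eval x = x * (ascPochhammer ℂ k).eval (x + 1) := by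
  simp [ascPochhammer_succ_left, Polynomial.eval_comp]

private lemma poch_diff (x : ℂ) (k : ℕ) :
    (ascPochhammer ℂ (k + 1)).eval x - (ascPochhammer ℂ (k + 1)).eval (x + 1)
      = -((k : ℂ) + 1) * (ascPochhammer ℂ k).eval (x + 1) := by
  rw [poch_left, ascPochhammer_succ_eval]
  ring

theorem genBessel_recurrence_mu (n : ℕ) (μ z : ℂ) (hz : z ≠ 0) :
    ((n : ℂ) + μ + 2) * genBessel n (μ + 2) z =
      (2 * n + μ + 2 - 2 / z) * genBessel n (μ + 1) z + (2 / z) * genBessel n μ z := by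
  set b : ℂ := (n : ℂ) + μ + 2 with hb
  have h1 : (n : ℂ) + (μ + 1) + 1 = b := by rw [hb]; ring
  have h2 : (n : ℂ) + (μ + 2) + 1 = b + 1 := by rw [hb]; ring
  have h0 : (n : ℂ) + μ + 1 = b - 1 := by rw [hb]; ring
  unfold genBessel
  rw [h0, h1, h2, Finset.mul_sum, Finset.mul_sum, Finset.mul_sum, ← Finset.sum_add_distrib]
  -- LHS term: b * C * P k (b+1) * (z/2)^k = C * (P k b * (b+k)) * (z/2)^k
  have hL : ∀ k ∈ Finset.range (n + 1),
      b * ((n.choose k : ℂ) * (ascPochhammer ℂ k).eval (b + 1) * (z / 2) ^ k)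
        = (n.choose k : ℂ) * ((ascPochhammer ℂ k).eval b * (b + k)) * (z / 2) ^ k := by
    intro k _
    have : b * (ascPochhammer ℂ k).eval (b + 1) = (ascPochhammer ℂ k).eval b * (b + k) := by
      rw [← poch_left, ascPochhammer_succ_eval]
    linear_combination ((n.choose k : ℂ) * (z / 2) ^ k) * this
  rw [Finset.sum_congr rfl hL]
  -- move everything to one side: show difference of sums equals 0
  rw [← sub_eq_zero, ← Finset.sum_sub_distrib]
  have key : ∀ k ∈ Finset.range (n + 1),
      (n.choose k : ℂ) * ((ascPochhammer ℂ k).eval b * (b + k)) * (z / 2) ^ k -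
        ((2 * n + μ + 2 - 2 / z) * ((n.choose k : ℂ) * (ascPochhammer ℂ k).eval b * (z / 2) ^ k) +
         2 / z * ((n.choose k : ℂ) * (ascPochhammer ℂ k).eval (b - 1) * (z / 2) ^ k))
      = (n.choose k : ℂ) * (ascPochhammer ℂ k).eval b * (z / 2) ^ k * ((k : ℂ) - n)
        - 2 / z * ((n.choose k : ℂ) *
            ((ascPochhammer ℂ k).eval (b - 1) - (ascPochhammer ℂ k).eval b) * (z / 2) ^ k) := by
    intro k _
    have : (2 * (n : ℂ) + μ + 2) = b + n := by rw [hb]; ring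
    rw [sub_mul, this]
    ring
  rw [Finset.sum_congr rfl key, Finset.sum_sub_distrib, sub_eq_zero]
  -- LHS sum: last term vanishes
  rw [Finset.sum_range_succ]
  simp only [Nat.cast_id, sub_self, mul_zero, add_zero]
  -- RHS sum: first term vanishes, shift index
  rw [Finset.sum_range_succ']
  have hz2 : (z / 2) ≠ 0 := by
    simpa using hz
  simp only [ascPochhammer_zero, Polynomial.eval_one, sub_self, mul_zero, zero_mul, mul_one,
    pow_zero, add_zero]
  refine Finset.sum_congr rfl fun j hj => ?_
  have hjn : j < n := Finset.mem_range.mp hj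
  have hd : (ascPochhammer ℂ (j + 1)).eval (b - 1) - (ascPochhammer ℂ (j + 1)).eval b
        = -((j : ℂ) + 1) * (ascPochhammer ℂ j).eval b := by
    have := poch_diff (b - 1) j
    rwa [sub_add_cancel] at this
  rw [hd]
  have hch : ((n.choose (j + 1) : ℂ)) * ((j : ℂ) + 1) = (n.choose j : ℂ) * ((n : ℂ) - j) := by
    have h2 : (n.choose (j+1)) * (j+1) = n.choose j * (n - j) := by
      rw [Nat.choose_succ_right_eq]
    have := congrArg (Nat.cast : ℕ → ℂ) h2
    push_cast [Nat.cast_sub hjn.le] at this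
    exact this
  have hpow : 2 / z * (z / 2) ^ (j + 1) = (z / 2) ^ j := by
    rw [pow_succ]
    field_simp
  calc (n.choose j : ℂ) * (ascPochhammer ℂ j).eval b * (z / 2) ^ j * ((j : ℂ) - n)
      = -((n.choose j : ℂ) * ((n : ℂ) - j)) * (ascPochhammer ℂ j).eval b * (z / 2) ^ j := by ring
    _ = -((n.choose (j+1) : ℂ) * ((j : ℂ) + 1)) * (ascPochhammer ℂ j).eval b * (z / 2) ^ j := by
        rw [hch]
    _ = 2 / z * ((n.choose (j + 1) : ℂ) *
          (-((j : ℂ) + 1) * (ascPochhammer ℂ j).eval b) * (z / 2) ^ (j + 1)) := by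
        linear_combination ((n.choose (j + 1) : ℂ) * ((j : ℂ) + 1) *
          (ascPochhammer ℂ j).eval b) * hpow
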